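/- arXiv:2511.19354 — 3 statements merged into one kernel-verified Lean document; each statement's English description precedes it below -/
import Mathlib

section
/- For every nonprincipal u ∈ βℕ the following are equivalent: (i) u is a weak P-point; (ii) for all f : ℕ → βℕ and v ∈ βℕ with f̃(v) = u there exists i ∈ ℕ with f(i) = u or f(i) principal; (iii) for all f : ℕ → βℕ and v ∈ βℕ with f̃(v) = u, either {i : f(i) = u} ∈ v or {i : f(i) is principal} ∈ v; (iv) for all g : ℕ × ℕ → ℕ and v, w ∈ βℕ with u = Ultrafilter.map g (v ⊗ w) there exists i ∈ ℕ such that Ultrafilter.map (fun j => g (i, j)) w equals u or is principal; (v) for all g : ℕ × ℕ → ℕ and v, w ∈ βℕ with u = Ultrafilter.map g (v ⊗ w), either {i : Ultrafilter.map (fun j => g (i, j)) w = u} ∈ v or {i : Ultrafilter.map (fun j => g (i, j)) w is principal} ∈ v. -/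
/-- The tensor (Fubini) product of ultrafilters: `S ∈ tensor u v` iff
`{x | {y | (x, y) ∈ S} ∈ v} ∈ u`. -/
def tensor {X Y : Type*} (u : Ultrafilter X) (v : Ultrafilter Y) : Ultrafilter (X × Y) :=
  u.bind fun x => v.map fun y => (x, y)

/-- The Rudin–Keisler preorder: `u ≤_RK v` iff `u` is the image of `v` under some map. -/
def RKLE {X Y : Type*} (u : Ultrafilter X) (v : Ultrafilter Y) : Prop :=
  ∃ f : Y → X, Ultrafilter.map f v = u

/-- Isomorphism of ultrafilters: image under a bijection. -/
def UIso {X Y : Type*} (u : Ultrafilter X) (v : Ultrafilter Y) : Prop :=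
  ∃ f : Y → X, Function.Bijective f ∧ Ultrafilter.map f v = u

/-- An ultrafilter is principal iff it is `pure x` for some point `x`. -/
def IsPrincipal {X : Type*} (u : Ultrafilter X) : Prop := ∃ x, u = pure x

/-- A weak P-point: a nonprincipal ultrafilter on `ℕ` not in the closure of any countable
set of ultrafilters avoiding it and all principal ultrafilters. -/
def WeakPPoint (u : Ultrafilter ℕ) : Prop :=
  ¬ IsPrincipal u ∧ ∀ A : Set (Ultrafilter ℕ), A.Countable → u ∉ A →
    (∀ x ∈ A, ¬ IsPrincipal x) → u ∉ closure A

/-- A space `Z` is `u`-compact iff every pushforward of `u` to `Z` converges. -/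
def UCompact {X : Type*} (u : Ultrafilter X) (Z : Type*) [TopologicalSpace Z] : Prop :=
  ∀ f : X → Z, ∃ z : Z, ↑(Ultrafilter.map f u) ≤ nhds z

/-- The Comfort preorder: `u ≤_C v` iff every `v`-compact space is `u`-compact. -/
def ComfortLE {X Y : Type*} (u : Ultrafilter X) (v : Ultrafilter Y) : Prop :=
  ∀ (Z : Type*) [TopologicalSpace Z], UCompact v Z → UCompact u Z

open Filter Set

section Aux

lemma mem_bind''' {α β : Type*} {v : Ultrafilter α} {f : α → Ultrafilter β} {s : Set β} :
    s ∈ v.bind f ↔ {i | s ∈ f i} ∈ v := Iff.rfl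

lemma joinM_map' {v : Ultrafilter ℕ} {f : ℕ → Ultrafilter ℕ} :
    joinM (Ultrafilter.map f v) = v.bind f := by
  have h0 : joinM (Ultrafilter.map f v) = (Ultrafilter.map f v).bind id := rfl
  rw [h0]; ext s; rw [mem_bind''', mem_bind''', Ultrafilter.mem_map]; rfl

lemma extend_eq_bind' (f : ℕ → Ultrafilter ℕ) (v : Ultrafilter ℕ) :
    Ultrafilter.extend f v = v.bind f := by
  rw [ultrafilter_extend_eq_iff, ultrafilter_converges_iff]; exact joinM_map'.symm

lemma mem_closure_iff'' {u : Ultrafilter ℕ} {A : Set (Ultrafilter ℕ)} :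
    u ∈ closure A ↔ ∃ V : Ultrafilter (Ultrafilter ℕ), A ∈ V ∧ joinM V = u := by
  rw [mem_closure_iff_ultrafilter]
  refine exists_congr fun V => and_congr_right fun _ => ?_
  rw [ultrafilter_converges_iff, eq_comm]

lemma extend_mem_closure' (f : ℕ → Ultrafilter ℕ) (v : Ultrafilter ℕ) :
    Ultrafilter.extend f v ∈ closure (Set.range f) := by
  rw [mem_closure_iff'']
  refine ⟨Ultrafilter.map f v, ?_, ?_⟩
  · rw [Ultrafilter.mem_map]; exact univ_mem' (fun i => mem_range_self i)
  · rw [joinM_map', extend_eq_bind']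

lemma exists_v_of_mem_closure_range' (f : ℕ → Ultrafilter ℕ) (u : Ultrafilter ℕ)
    (h : u ∈ closure (Set.range f)) : ∃ v, Ultrafilter.extend f v = u := by
  classical
  obtain ⟨V, hA, hj⟩ := mem_closure_iff''.mp h
  set s : Ultrafilter ℕ → ℕ := fun x => if h : ∃ i, f i = x then h.choose else 0 with hs
  refine ⟨Ultrafilter.map s V, ?_⟩
  rw [extend_eq_bind', ← joinM_map', Ultrafilter.map_map]
  have : Ultrafilter.map (f ∘ s) V = V := by
    apply Ultrafilter.coe_injective
    rw [Ultrafilter.coe_map]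
    have hev : (f ∘ s) =ᶠ[(V : Filter (Ultrafilter ℕ))] id := by
      filter_upwards [hA] with x hx
      obtain ⟨i, rfl⟩ := hx
      have hex : ∃ j, f j = f i := ⟨i, rfl⟩
      simp only [Function.comp, hs, dif_pos hex, id]
      exact hex.choose_spec
    rw [Filter.map_congr hev, Filter.map_id]
  rw [this, hj]

lemma extend_congr_ae {f f' : ℕ → Ultrafilter ℕ} {v : Ultrafilter ℕ}
    (h : {i | f i = f' i} ∈ v) : Ultrafilter.extend f v = Ultrafilter.extend f' v := by
  rw [extend_eq_bind', extend_eq_bind']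
  ext s
  rw [mem_bind''', mem_bind''']
  constructor <;> intro hm
  · filter_upwards [hm, h] with i h1 h2; rwa [← h2]
  · filter_upwards [hm, h] with i h1 h2; rwa [h2]

lemma not_principal_map_inj {g : ℕ → ℕ} (hg : Function.Injective g) :
    ¬ IsPrincipal (Ultrafilter.map g (Filter.hyperfilter ℕ)) := by
  rintro ⟨x, hx⟩
  have h1 : {x} ∈ Ultrafilter.map g (Filter.hyperfilter ℕ) := by
    rw [hx]; exact Ultrafilter.mem_pure.mpr rfl
  rw [Ultrafilter.mem_map] at h1
  have hss : (g ⁻¹' {x}).Subsingleton := fun a ha b hb => hg (ha.trans hb.symm)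
  exact Filter.notMem_hyperfilter_of_finite hss.finite h1

lemma exists_filler (u : Ultrafilter ℕ) :
    ∃ w : Ultrafilter ℕ, ¬ IsPrincipal w ∧ w ≠ u := by
  set w₁ := Ultrafilter.map (fun n => 2 * n) (Filter.hyperfilter ℕ) with hw1
  set w₂ := Ultrafilter.map (fun n => 2 * n + 1) (Filter.hyperfilter ℕ) with hw2
  have h1 : ¬ IsPrincipal w₁ := not_principal_map_inj (fun a b h => by omega)
  have h2 : ¬ IsPrincipal w₂ := not_principal_map_inj (fun a b h => by omega)
  have hne : w₁ ≠ w₂ := by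
    intro h
    have hm1 : {n | n % 2 = 0} ∈ w₁ := by
      rw [hw1, Ultrafilter.mem_map]
      exact univ_mem' (fun n => by simp [Nat.mul_mod_right])
    rw [h, hw2, Ultrafilter.mem_map] at hm1
    have : (fun n => 2 * n + 1) ⁻¹' {n | n % 2 = 0} = (∅ : Set ℕ) := by
      ext n; simp [Nat.add_mul_mod_self_left]
    rw [this] at hm1
    exact (Filter.hyperfilter ℕ).empty_notMem hm1
  by_cases h : w₁ = u
  · exact ⟨w₂, h2, fun hc => hne (h.trans hc.symm)⟩
  · exact ⟨w₁, h1, h⟩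

/-- decoding: the `i`-th entry of a list -/
def dec' (i : ℕ) (l : List ℕ) : ℕ := l.getD i 0

lemma realize' (f : ℕ → Ultrafilter ℕ) :
    ∃ (w : Ultrafilter ℕ) (h : ℕ → ℕ → ℕ), ∀ i, Ultrafilter.map (h i) w = f i := by
  classical
  set 𝒮 : Set (Set (List ℕ)) := {T | ∃ i S, S ∈ f i ∧ T = dec' i ⁻¹' S} with h𝒮
  have hFIP : ∀ t ⊆ 𝒮, t.Finite → (⋂₀ t).Nonempty := by
    intro t hts htf
    have key : t ⊆ 𝒮 → ∃ (V : ℕ → Set ℕ) (N : ℕ), (∀ i, V i ∈ f i) ∧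
        ∀ T ∈ t, ∃ i, i < N ∧ dec' i ⁻¹' (V i) ⊆ T := by
      refine Set.Finite.induction_on t htf (fun _ => ⟨fun _ => univ, 0, fun i => univ_mem, ?_⟩) ?_
      · intro T hT; exact absurd hT (notMem_empty T)
      · intro T₀ t' hT₀ ht' IH hsub
        obtain ⟨i₀, S₀, hS₀, rfl⟩ : T₀ ∈ 𝒮 := hsub (mem_insert _ _)
        obtain ⟨V, N, hV, hVt⟩ := IH fun T hT => hsub (mem_insert_of_mem _ hT)
        refine ⟨fun i => V i ∩ (if i = i₀ then S₀ else univ), max N (i₀ + 1), ?_, ?_⟩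
        · intro i
          dsimp only
          by_cases hi : i = i₀
          · subst hi; rw [if_pos rfl]; exact inter_mem (hV i) hS₀
          · rw [if_neg hi]; exact inter_mem (hV i) univ_mem
        · rintro T (rfl | hT)
          · exact ⟨i₀, lt_max_of_lt_right (Nat.lt_succ_self i₀),
              preimage_mono (by simp [inter_subset_right])⟩
          · obtain ⟨i, hiN, hsub'⟩ := hVt T hT
            exact ⟨i, lt_max_of_lt_left hiN, subset_trans (preimage_mono inter_subset_left) hsub'⟩
    obtain ⟨V, N, hV, hVt⟩ := key hts
    have hm : ∀ i, ∃ x, x ∈ V i := fun i => (f i).nonempty_of_mem (hV i)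
    choose m hmV using hm
    refine ⟨(List.range N).map m, ?_⟩
    rw [mem_sInter]
    intro T hT
    obtain ⟨i, hiN, hsub'⟩ := hVt T hT
    apply hsub'
    have hlen : i < ((List.range N).map m).length := by simpa using hiN
    have : dec' i ((List.range N).map m) = m i := by
      rw [dec', List.getD_eq_getElem _ _ hlen]
      simp
    simpa [this] using hmV i
  have hne : Filter.NeBot (Filter.generate 𝒮) := Filter.generate_neBot_iff.mpr hFIP
  obtain ⟨W, hW⟩ := Filter.exists_ultrafilter_le (Filter.generate 𝒮)
  let e : List ℕ ≃ ℕ := Denumerable.eqv (List ℕ)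
  refine ⟨Ultrafilter.map e W, fun i n => dec' i (e.symm n), fun i => ?_⟩
  have h1 : Ultrafilter.map (fun n => dec' i (e.symm n)) (Ultrafilter.map e W)
      = Ultrafilter.map (dec' i) W := by
    rw [Ultrafilter.map_map]
    congr 1
    funext x
    simp
  rw [h1]
  have h2 : (Ultrafilter.map (dec' i) W : Filter ℕ) ≤ (f i : Filter ℕ) := by
    intro S hS
    have : dec' i ⁻¹' S ∈ Filter.generate 𝒮 :=
      Filter.mem_generate_of_mem ⟨i, S, hS, rfl⟩
    exact hW this
  exact Ultrafilter.coe_le_coe.mp h2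

lemma map_tensor' (g : ℕ × ℕ → ℕ) (v w : Ultrafilter ℕ) :
    Ultrafilter.map g (tensor v w)
      = v.bind (fun i => Ultrafilter.map (fun j => g (i, j)) w) := by
  ext s
  exact Iff.rfl

end Aux

theorem stmt2 (u : Ultrafilter ℕ) (hu : ¬ IsPrincipal u) :
    (WeakPPoint u ↔ ∀ (f : ℕ → Ultrafilter ℕ) (v : Ultrafilter ℕ),
        Ultrafilter.extend f v = u → ∃ i : ℕ, f i = u ∨ IsPrincipal (f i)) ∧
    (WeakPPoint u ↔ ∀ (f : ℕ → Ultrafilter ℕ) (v : Ultrafilter ℕ),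
        Ultrafilter.extend f v = u →
        {i : ℕ | f i = u} ∈ v ∨ {i : ℕ | IsPrincipal (f i)} ∈ v) ∧
    (WeakPPoint u ↔ ∀ (g : ℕ × ℕ → ℕ) (v w : Ultrafilter ℕ),
        u = Ultrafilter.map g (tensor v w) →
        ∃ i : ℕ, Ultrafilter.map (fun j => g (i, j)) w = u ∨
          IsPrincipal (Ultrafilter.map (fun j => g (i, j)) w)) ∧
    (WeakPPoint u ↔ ∀ (g : ℕ × ℕ → ℕ) (v w : Ultrafilter ℕ),
        u = Ultrafilter.map g (tensor v w) →
        {i : ℕ | Ultrafilter.map (fun j => g (i, j)) w = u} ∈ v ∨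
        {i : ℕ | IsPrincipal (Ultrafilter.map (fun j => g (i, j)) w)} ∈ v) := by
  classical
  have h12 : WeakPPoint u → ∀ (f : ℕ → Ultrafilter ℕ) (v : Ultrafilter ℕ),
      Ultrafilter.extend f v = u → ∃ i : ℕ, f i = u ∨ IsPrincipal (f i) := by
    intro hW f v hfv
    by_contra hcon
    push_neg at hcon
    have hAu : u ∉ Set.range f := by rintro ⟨i, rfl⟩; exact (hcon i).1 rfl
    exact hW.2 (Set.range f) (Set.countable_range f) hAu
      (by rintro x ⟨i, rfl⟩; exact (hcon i).2) (hfv ▸ extend_mem_closure' f v)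
  have h21 : (∀ (f : ℕ → Ultrafilter ℕ) (v : Ultrafilter ℕ),
      Ultrafilter.extend f v = u → ∃ i : ℕ, f i = u ∨ IsPrincipal (f i)) →
      WeakPPoint u := by
    intro hP2
    refine ⟨hu, fun A hAc hAu hAnp hclo => ?_⟩
    rcases A.eq_empty_or_nonempty with rfl | hne
    · simp at hclo
    · obtain ⟨f, rfl⟩ := hAc.exists_eq_range hne
      obtain ⟨v, hv⟩ := exists_v_of_mem_closure_range' f u hclo
      obtain ⟨i, hi | hi⟩ := hP2 f v hv
      · exact hAu ⟨i, hi⟩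
      · exact hAnp (f i) (mem_range_self i) hi
  have h23 : (∀ (f : ℕ → Ultrafilter ℕ) (v : Ultrafilter ℕ),
      Ultrafilter.extend f v = u → ∃ i : ℕ, f i = u ∨ IsPrincipal (f i)) →
      ∀ (f : ℕ → Ultrafilter ℕ) (v : Ultrafilter ℕ), Ultrafilter.extend f v = u →
      {i : ℕ | f i = u} ∈ v ∨ {i : ℕ | IsPrincipal (f i)} ∈ v := by
    intro hP2 f v hfv
    by_contra hcon
    push_neg at hcon
    obtain ⟨hc1, hc2⟩ := hcon
    have hS : {i | f i ≠ u ∧ ¬ IsPrincipal (f i)} ∈ v := by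
      have c1 : {i | f i = u}ᶜ ∈ v := Ultrafilter.compl_mem_iff_notMem.mpr hc1
      have c2 : {i | IsPrincipal (f i)}ᶜ ∈ v := Ultrafilter.compl_mem_iff_notMem.mpr hc2
      filter_upwards [c1, c2] with i a b using ⟨a, b⟩
    obtain ⟨w₀, hw₀np, hw₀ne⟩ := exists_filler u
    set f' : ℕ → Ultrafilter ℕ :=
      fun i => if f i = u ∨ IsPrincipal (f i) then w₀ else f i with hf'
    have hae : {i | f i = f' i} ∈ v := by
      filter_upwards [hS] with i hi
      exact (if_neg (not_or.mpr hi)).symm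
    have hext : Ultrafilter.extend f' v = u := by rw [← extend_congr_ae hae, hfv]
    obtain ⟨i, hi⟩ := hP2 f' v hext
    by_cases hcond : f i = u ∨ IsPrincipal (f i)
    · have he : f' i = w₀ := if_pos hcond
      rw [he] at hi
      rcases hi with hi | hi
      · exact hw₀ne hi
      · exact hw₀np hi
    · have he : f' i = f i := if_neg hcond
      rw [he] at hi
      exact hcond hi
  have h32 : (∀ (f : ℕ → Ultrafilter ℕ) (v : Ultrafilter ℕ), Ultrafilter.extend f v = u →
      {i : ℕ | f i = u} ∈ v ∨ {i : ℕ | IsPrincipal (f i)} ∈ v) →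
      ∀ (f : ℕ → Ultrafilter ℕ) (v : Ultrafilter ℕ),
      Ultrafilter.extend f v = u → ∃ i : ℕ, f i = u ∨ IsPrincipal (f i) := by
    intro hP3 f v hfv
    rcases hP3 f v hfv with h | h
    · obtain ⟨i, hi⟩ := v.nonempty_of_mem h; exact ⟨i, Or.inl hi⟩
    · obtain ⟨i, hi⟩ := v.nonempty_of_mem h; exact ⟨i, Or.inr hi⟩
  have h35 : (∀ (f : ℕ → Ultrafilter ℕ) (v : Ultrafilter ℕ), Ultrafilter.extend f v = u →
      {i : ℕ | f i = u} ∈ v ∨ {i : ℕ | IsPrincipal (f i)} ∈ v) →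
      ∀ (g : ℕ × ℕ → ℕ) (v w : Ultrafilter ℕ), u = Ultrafilter.map g (tensor v w) →
      {i : ℕ | Ultrafilter.map (fun j => g (i, j)) w = u} ∈ v ∨
      {i : ℕ | IsPrincipal (Ultrafilter.map (fun j => g (i, j)) w)} ∈ v := by
    intro hP3 g v w hg
    have hext : Ultrafilter.extend (fun i => Ultrafilter.map (fun j => g (i, j)) w) v = u := by
      rw [extend_eq_bind', ← map_tensor' g v w, ← hg]
    exact hP3 _ v hext
  have h54 : (∀ (g : ℕ × ℕ → ℕ) (v w : Ultrafilter ℕ),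
      u = Ultrafilter.map g (tensor v w) →
      {i : ℕ | Ultrafilter.map (fun j => g (i, j)) w = u} ∈ v ∨
      {i : ℕ | IsPrincipal (Ultrafilter.map (fun j => g (i, j)) w)} ∈ v) →
      ∀ (g : ℕ × ℕ → ℕ) (v w : Ultrafilter ℕ), u = Ultrafilter.map g (tensor v w) →
      ∃ i : ℕ, Ultrafilter.map (fun j => g (i, j)) w = u ∨
        IsPrincipal (Ultrafilter.map (fun j => g (i, j)) w) := by
    intro hP5 g v w hg
    rcases hP5 g v w hg with h | h
    · obtain ⟨i, hi⟩ := v.nonempty_of_mem h; exact ⟨i, Or.inl hi⟩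
    · obtain ⟨i, hi⟩ := v.nonempty_of_mem h; exact ⟨i, Or.inr hi⟩
  have h42 : (∀ (g : ℕ × ℕ → ℕ) (v w : Ultrafilter ℕ),
      u = Ultrafilter.map g (tensor v w) →
      ∃ i : ℕ, Ultrafilter.map (fun j => g (i, j)) w = u ∨
        IsPrincipal (Ultrafilter.map (fun j => g (i, j)) w)) →
      ∀ (f : ℕ → Ultrafilter ℕ) (v : Ultrafilter ℕ),
      Ultrafilter.extend f v = u → ∃ i : ℕ, f i = u ∨ IsPrincipal (f i) := by
    intro hP4 f v hfv
    obtain ⟨w, h, hh⟩ := realize' f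
    have hb : Ultrafilter.map (fun p : ℕ × ℕ => h p.1 p.2) (tensor v w) = v.bind f := by
      rw [map_tensor']
      congr 1
      funext i
      exact hh i
    obtain ⟨i, hi⟩ := hP4 (fun p : ℕ × ℕ => h p.1 p.2) v w
      (by rw [hb, ← extend_eq_bind' f v, hfv])
    have hrew : Ultrafilter.map (fun j => (fun p : ℕ × ℕ => h p.1 p.2) (i, j)) w = f i := hh i
    rw [hrew] at hi
    exact ⟨i, hi⟩
  exact ⟨⟨h12, h21⟩,
    ⟨fun h => h23 (h12 h), fun h => h21 (h32 h)⟩,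
    ⟨fun h => h54 (h35 (h23 (h12 h))), fun h => h21 (h42 h)⟩,
    ⟨fun h => h35 (h23 (h12 h)), fun h => h21 (h42 (h54 h))⟩⟩
end

section
/- Let u ∈ βℕ be a weak P-point, n ∈ ℕ, e a function from the (n+1)-fold product ℕ × ⋯ × ℕ to ℕ, and v₀, …, vₙ ∈ βℕ. If u ≤_RK Ultrafilter.map e (v₀ ⊗ ⋯ ⊗ vₙ) (the ultrafilter extension of e evaluated at v₀, …, vₙ, where v₀ ⊗ ⋯ ⊗ vₙ is the left-associated iterated tensor product), then u ≤_RK v_k for some 0 ≤ k ≤ n. -/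
/-- The `(n+1)`-fold left-associated product type `ℕ × ⋯ × ℕ`. -/
def iterType : ℕ → Type
  | 0 => ℕ
  | n + 1 => iterType n × ℕ

/-- The left-associated iterated tensor product `v₀ ⊗ ⋯ ⊗ vₙ`. -/
def iterTensor (v : ℕ → Ultrafilter ℕ) : (n : ℕ) → Ultrafilter (iterType n)
  | 0 => v 0
  | n + 1 => tensor (iterTensor v n) (v (n + 1))


theorem mem_tensor {X Y : Type*} {u : Ultrafilter X} {v : Ultrafilter Y} {S : Set (X × Y)} :
    S ∈ tensor u v ↔ {x | {y | (x,y) ∈ S} ∈ v} ∈ u := by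
  have : S ∈ tensor u v ↔ S ∈ Filter.bind (↑u)
      (fun x => ((v.map fun y => (x,y) : Ultrafilter (X × Y)) : Filter (X × Y))) := Iff.rfl
  rw [this, Filter.mem_bind]
  simp only [Ultrafilter.mem_coe, Ultrafilter.mem_map, Set.preimage]
  exact ⟨fun ⟨t, ht, h⟩ => u.sets_of_superset ht h, fun h => ⟨_, h, fun x hx => hx⟩⟩

theorem key_lemma {X : Type} [Countable X] (u : Ultrafilter ℕ) (hu : WeakPPoint u)
    (w : Ultrafilter X) (v : Ultrafilter ℕ) (g : X × ℕ → ℕ)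
    (hg : Ultrafilter.map g (tensor w v) = u) : RKLE u w ∨ RKLE u v := by
  classical
  set H : X → Ultrafilter ℕ := fun x => Ultrafilter.map (fun y => g (x, y)) v with hH
  have hmem : ∀ A : Set ℕ, A ∈ u ↔ {x | A ∈ H x} ∈ w := by
    intro A
    rw [← hg, Ultrafilter.mem_map, mem_tensor]
    rfl
  by_cases hx : ∃ x, H x = u
  · exact Or.inr ⟨fun y => g (hx.choose, y), hx.choose_spec⟩
  by_cases hp : {x | IsPrincipal (H x)} ∈ w
  · left
    set m : X → ℕ := fun x => if h : IsPrincipal (H x) then h.choose else 0 with hm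
    have hmx : ∀ x ∈ {x | IsPrincipal (H x)}, H x = pure (m x) := by
      intro x hx
      have hmeq : m x = hx.choose := dif_pos hx
      rw [hmeq]
      exact hx.choose_spec
    refine ⟨m, ?_⟩
    have main : ∀ A : Set ℕ, A ∈ u → A ∈ Ultrafilter.map m w := by
      intro A hA
      rw [Ultrafilter.mem_map]
      have h1 : {x | A ∈ H x} ∈ w := (hmem A).1 hA
      have h2 : {x | IsPrincipal (H x)} ∩ {x | A ∈ H x} ∈ w := Filter.inter_mem hp h1
      refine w.sets_of_superset h2 ?_
      rintro x ⟨hpx, hAx⟩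
      have hAx' : A ∈ H x := hAx
      rw [hmx x hpx] at hAx'
      simpa using hAx' 
    ext A
    constructor
    · intro hA
      by_contra hA'
      have : Aᶜ ∈ u := Ultrafilter.compl_mem_iff_notMem.2 hA'
      have := main Aᶜ this
      exact (Ultrafilter.compl_mem_iff_notMem.1 this) hA
    · exact main A
  · exfalso
    have hS3 : {x | ¬ IsPrincipal (H x)} ∈ w := Ultrafilter.compl_mem_iff_notMem.2 hp
    set A' : Set (Ultrafilter ℕ) := H '' {x | ¬ IsPrincipal (H x)} with hA'
    have hcount : A'.Countable := (Set.countable_univ.mono (Set.subset_univ _)).image H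
    have hunotin : u ∉ A' := by
      rintro ⟨x, _, hxu⟩
      exact hx ⟨x, hxu⟩
    have hnp : ∀ z ∈ A', ¬ IsPrincipal z := by
      rintro z ⟨x, hx', rfl⟩
      exact hx'
    have hclos : u ∈ closure A' := by
      rw [ultrafilterBasis_is_basis.mem_closure_iff]
      rintro o ⟨s, rfl⟩ hus
      have hsu : s ∈ u := hus
      have h1 : {x | s ∈ H x} ∈ w := (hmem s).1 hsu
      have h2 : {x | s ∈ H x} ∩ {x | ¬ IsPrincipal (H x)} ∈ w := Filter.inter_mem h1 hS3
      obtain ⟨x, hx1, hx2⟩ := Ultrafilter.nonempty_of_mem h2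
      exact ⟨H x, hx1, ⟨x, hx2, rfl⟩⟩
    exact hu.2 A' hcount hunotin hnp hclos

instance iterType.countable : ∀ n, Countable (iterType n)
  | 0 => inferInstanceAs (Countable ℕ)
  | n + 1 => by
      have := iterType.countable n
      exact inferInstanceAs (Countable (iterType n × ℕ))

theorem main_lemma (u : Ultrafilter ℕ) (hu : WeakPPoint u) :
    ∀ (n : ℕ) (g : iterType n → ℕ) (v : ℕ → Ultrafilter ℕ),
      Ultrafilter.map g (iterTensor v n) = u → ∃ k ≤ n, RKLE u (v k) := by
  intro n
  induction n with
  | zero => intro g v hg; exact ⟨0, le_refl 0, g, hg⟩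
  | succ n ih =>
      intro g v hg
      have := key_lemma u hu (iterTensor v n) (v (n + 1)) g hg
      rcases this with ⟨f, hf⟩ | h
      · obtain ⟨k, hk, hrk⟩ := ih f v hf
        exact ⟨k, hk.trans n.le_succ, hrk⟩
      · exact ⟨n + 1, le_refl _, h⟩

theorem stmt5 (u : Ultrafilter ℕ) (hu : WeakPPoint u) (n : ℕ) (e : iterType n → ℕ)
    (v : ℕ → Ultrafilter ℕ) (h : RKLE u (Ultrafilter.map e (iterTensor v n))) :
    ∃ k ≤ n, RKLE u (v k) := by
  obtain ⟨f, hf⟩ := h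
  rw [Ultrafilter.map_map] at hf
  exact main_lemma u hu n (f ∘ e) v hf
end

section
/- Fix a ladder system on ω₁. Let u = (u_α)_{α<ω₁} be a sequence of nonprincipal ultrafilters in βℕ, let X ⊆ ω₁, let f^X be an admissible family for the X-modification u^X, and write v_{X,α} := f̃^X_α(u^X_α). Then for every α < ω₁ and every weak P-point w ∈ βℕ, if w ≤_C v_{X,α} then there exists β ≤ α with β ∈ X ∪ Lim(ω₁) such that w ≤_RK u_β. -/
/-- The first uncountable ordinal `ω₁`. -/
noncomputable def omega1 : Ordinal := (Cardinal.aleph 1).ord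

/-- A ladder system on `ω₁`: for each nonzero limit `α < ω₁`, a strictly increasing
`ω`-sequence of ordinals cofinal in `α`. -/
def IsLadderSystem (L : Ordinal → ℕ → Ordinal) : Prop :=
  ∀ α : Ordinal, α < omega1 → Order.IsSuccLimit α →
    StrictMono (L α) ∧ (∀ i : ℕ, L α i < α) ∧ ∀ β < α, ∃ i : ℕ, β ≤ L α i

/-- `vSeq u f α = f̃_α(u_α)`. -/
noncomputable def vSeq (u : Ordinal → Ultrafilter ℕ) (f : Ordinal → ℕ → Ultrafilter ℕ)
    (α : Ordinal) : Ultrafilter ℕ :=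
  Ultrafilter.extend (f α) (u α)

/-- `(f_α)_{α<ω₁}` is admissible for `u = (u_α)_{α<ω₁}` (w.r.t. the ladder system `L`):
writing `v_α := f̃_α(u_α)`, the map `f_0` is injective with principal values; at a successor
`β+1`, `f_{β+1}` is injective with discrete range and all values isomorphic to `v_β`; at a
nonzero limit `α`, `f_α` is injective with discrete range and `f_α(i) ≅ v_{α_i}`. -/
def Admissible (L : Ordinal → ℕ → Ordinal) (u : Ordinal → Ultrafilter ℕ)
    (f : Ordinal → ℕ → Ultrafilter ℕ) : Prop :=
  (Function.Injective (f 0) ∧ ∀ i : ℕ, IsPrincipal (f 0 i)) ∧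
  (∀ β : Ordinal, β + 1 < omega1 →
    Function.Injective (f (β + 1)) ∧ DiscreteTopology (Set.range (f (β + 1))) ∧
    ∀ i : ℕ, UIso (f (β + 1) i) (vSeq u f β)) ∧
  ∀ α : Ordinal, α < omega1 → Order.IsSuccLimit α →
    Function.Injective (f α) ∧ DiscreteTopology (Set.range (f α)) ∧
    ∀ i : ℕ, UIso (f α i) (vSeq u f (L α i))

open Classical in
/-- The `X`-modification of `u`: keep `u_α` for `α ∈ X ∪ Lim(ω₁)` and replace the
remaining values by the principal ultrafilter `pure 0`. -/
noncomputable def modif (u : Ordinal → Ultrafilter ℕ) (X : Set Ordinal)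
    (α : Ordinal) : Ultrafilter ℕ :=
  if α ∈ X ∨ (Order.IsSuccLimit α ∧ α < omega1) then u α else pure 0

section Auxiliary

open Filter Set Topology

lemma mem_ubind {α β : Type*} {u : Ultrafilter α} {t : α → Ultrafilter β} {s : Set β} :
    s ∈ u.bind t ↔ {i | s ∈ t i} ∈ u :=
  Filter.mem_bind'

lemma joinM_map {α : Type*} (u : Ultrafilter α) (t : α → Ultrafilter α) :
    joinM (Ultrafilter.map t u) = u.bind t := by
  ext s
  change s ∈ (Ultrafilter.map t u).bind id ↔ _
  rw [mem_ubind, mem_ubind, Ultrafilter.mem_map]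
  rfl

lemma extend_eq_bind (t : ℕ → Ultrafilter ℕ) (u : Ultrafilter ℕ) :
    Ultrafilter.extend t u = u.bind t := by
  rw [ultrafilter_extend_eq_iff, ultrafilter_converges_iff, joinM_map]

lemma map_ubind {α β γ : Type*} (g : β → γ) (u : Ultrafilter α) (t : α → Ultrafilter β) :
    Ultrafilter.map g (u.bind t) = u.bind fun i => Ultrafilter.map g (t i) := by
  ext s
  rw [Ultrafilter.mem_map, mem_ubind, mem_ubind]
  simp [Ultrafilter.mem_map]

lemma not_RKLE_pure {w : Ultrafilter ℕ} (hw : ¬ IsPrincipal w) (n : ℕ) :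
    ¬ RKLE w (pure n) := by
  rintro ⟨g, hg⟩
  exact hw ⟨g n, by rw [← hg, Ultrafilter.map_pure]⟩

lemma bind_pure_eq (w : Ultrafilter ℕ) : (w.bind fun n => (pure n : Ultrafilter ℕ)) = w := by
  ext s
  rw [mem_ubind]
  simp

lemma ucompact_of_rkle {p q : Ultrafilter ℕ} {Z : Type*} [TopologicalSpace Z]
    (h : RKLE p q) (hq : UCompact q Z) : UCompact p Z := by
  obtain ⟨g, rfl⟩ := h
  intro f
  obtain ⟨z, hz⟩ := hq (f ∘ g)
  exact ⟨z, by rw [Ultrafilter.map_map]; exact hz⟩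

lemma ucompact_bind {q : Ultrafilter ℕ} {t : ℕ → Ultrafilter ℕ} {Z : Type*} [TopologicalSpace Z]
    (hq : UCompact q Z) (ht : ∀ i, UCompact (t i) Z) : UCompact (q.bind t) Z := by
  intro h
  choose z hz using fun i => ht i h
  obtain ⟨z0, hz0⟩ := hq z
  refine ⟨z0, fun s hs => ?_⟩
  obtain ⟨V, hVs, hVopen, hz0V⟩ := mem_nhds_iff.mp hs
  rw [Ultrafilter.mem_coe, Ultrafilter.mem_map]
  refine mem_of_superset ?_ (preimage_mono hVs : h ⁻¹' V ⊆ h ⁻¹' s)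
  rw [Ultrafilter.mem_coe, mem_ubind]
  have h1 : z ⁻¹' V ∈ q := by
    have := hz0 (hVopen.mem_nhds hz0V)
    rwa [Ultrafilter.mem_coe, Ultrafilter.mem_map] at this
  apply mem_of_superset h1
  intro i hi
  have h2 := hz i (hVopen.mem_nhds hi)
  rwa [Ultrafilter.mem_coe, Ultrafilter.mem_map] at h2

lemma wpp_bind {w q : Ultrafilter ℕ} {t : ℕ → Ultrafilter ℕ} (hw : WeakPPoint w)
    (h : RKLE w (q.bind t)) : RKLE w q ∨ ∃ i, RKLE w (t i) := by
  classical
  obtain ⟨g, hg⟩ := h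
  rw [map_ubind] at hg
  set t' : ℕ → Ultrafilter ℕ := fun i => Ultrafilter.map g (t i) with ht'
  by_cases h1 : {i | t' i = w} ∈ q
  · obtain ⟨i, hi⟩ := Ultrafilter.nonempty_of_mem h1
    exact Or.inr ⟨i, g, hi⟩
  by_cases h2 : {i | IsPrincipal (t' i)} ∈ q
  · left
    set m : ℕ → ℕ := fun i => if h : IsPrincipal (t' i) then h.choose else 0 with hm
    refine ⟨m, Ultrafilter.coe_le_coe.mp fun s hs => ?_⟩
    rw [Ultrafilter.mem_coe, Ultrafilter.mem_map]
    rw [Ultrafilter.mem_coe, ← hg, mem_ubind] at hs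
    apply mem_of_superset (inter_mem h2 hs)
    rintro i ⟨hip, his⟩
    have hmi : m i = hip.choose := dif_pos hip
    have hpr : t' i = pure hip.choose := hip.choose_spec
    have his2 : s ∈ t' i := his
    rw [hpr] at his2
    simpa [hmi] using his2
  · exfalso
    have hA : {i | t' i ≠ w ∧ ¬ IsPrincipal (t' i)} ∈ q := by
      have c1 : {i | t' i = w}ᶜ ∈ q := Ultrafilter.compl_mem_iff_notMem.mpr h1
      have c2 : {i | IsPrincipal (t' i)}ᶜ ∈ q := Ultrafilter.compl_mem_iff_notMem.mpr h2
      exact inter_mem c1 c2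
    set A := {i | t' i ≠ w ∧ ¬ IsPrincipal (t' i)} with hAdef
    have hcl : w ∈ closure (t' '' A) := by
      rw [ultrafilterBasis_is_basis.mem_closure_iff]
      rintro o ⟨s, rfl⟩ hwo
      have hwo2 : s ∈ w := hwo
      have hs : {i | s ∈ t' i} ∈ q := by
        rw [← hg, mem_ubind] at hwo2
        exact hwo2
      obtain ⟨i, hiA, hi⟩ := Ultrafilter.nonempty_of_mem (inter_mem hA hs)
      exact ⟨t' i, hi, mem_image_of_mem _ hiA⟩
    refine hw.2 (t' '' A) ((Set.to_countable A).image t') ?_ ?_ hcl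
    · rintro ⟨i, hiA, hit⟩
      exact hiA.1 hit
    · rintro x ⟨i, hiA, rfl⟩
      exact hiA.2

lemma Z_ucompact {w q : Ultrafilter ℕ} (hw : WeakPPoint w) (hq : ¬ RKLE w q) :
    UCompact q {p : Ultrafilter ℕ // ¬ RKLE w p} := by
  intro h
  have hz : ¬ RKLE w (q.bind fun i => (h i).1) := by
    intro hr
    rcases wpp_bind hw hr with h' | ⟨i, h'⟩
    · exact hq h'
    · exact (h i).2 h'
  refine ⟨⟨_, hz⟩, ?_⟩
  rw [nhds_subtype_eq_comap, ← Filter.map_le_iff_le_comap, ← Ultrafilter.coe_map,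
    Ultrafilter.map_map]
  exact ultrafilter_converges_iff.mpr (joinM_map q fun i => (h i).1).symm

lemma Z_not_wcompact {w : Ultrafilter ℕ} (hw : ¬ IsPrincipal w) :
    ¬ UCompact w {p : Ultrafilter ℕ // ¬ RKLE w p} := by
  intro h
  obtain ⟨z, hz⟩ := h fun n => ⟨pure n, not_RKLE_pure hw n⟩
  have h1 : ↑(Ultrafilter.map (pure : ℕ → Ultrafilter ℕ) w) ≤ 𝓝 z.1 := by
    have hc : Filter.Tendsto Subtype.val (𝓝 z) (𝓝 z.1) := continuous_subtype_val.tendsto z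
    have h2 := (Filter.map_mono hz).trans hc
    rwa [← Ultrafilter.coe_map, Ultrafilter.map_map] at h2
  have h2 : z.1 = joinM (Ultrafilter.map pure w) := ultrafilter_converges_iff.mp h1
  rw [joinM_map, bind_pure_eq] at h2
  exact z.2 (by rw [h2]; exact ⟨id, Ultrafilter.map_id w⟩)

lemma ucompact_up {q : Ultrafilter ℕ} {Z : Type} [TopologicalSpace Z]
    (h : UCompact q Z) : UCompact q (ULift.{v} Z) := by
  intro f
  obtain ⟨z, hz⟩ := h (ULift.down ∘ f)
  refine ⟨ULift.up z, ?_⟩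
  rw [(Homeomorph.ulift (X := Z)).nhds_eq_comap (ULift.up z),
    ← Filter.map_le_iff_le_comap, ← Ultrafilter.coe_map, Ultrafilter.map_map]
  exact hz

lemma ucompact_down {q : Ultrafilter ℕ} {Z : Type} [TopologicalSpace Z]
    (h : UCompact q (ULift.{v} Z)) : UCompact q Z := by
  intro f
  obtain ⟨z, hz⟩ := h (ULift.up ∘ f)
  refine ⟨z.down, ?_⟩
  have hc : Filter.Tendsto ULift.down (𝓝 z) (𝓝 z.down) := continuous_uliftDown.tendsto z
  have h2 := (Filter.map_mono hz).trans hc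
  rwa [← Ultrafilter.coe_map, Ultrafilter.map_map] at h2

end Auxiliary


theorem stmt13 (L : Ordinal → ℕ → Ordinal) (hL : IsLadderSystem L)
    (u : Ordinal → Ultrafilter ℕ)
    (hu : ∀ α : Ordinal, α < omega1 → ¬ IsPrincipal (u α))
    (X : Set Ordinal) (fX : Ordinal → ℕ → Ultrafilter ℕ)
    (hfX : Admissible L (modif u X) fX) :
    ∀ α : Ordinal, α < omega1 → ∀ w : Ultrafilter ℕ, WeakPPoint w →
      ComfortLE w (vSeq (modif u X) fX α) →
      ∃ β ≤ α, (β ∈ X ∨ (Order.IsSuccLimit β ∧ β < omega1)) ∧ RKLE w (u β) := by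
  intro α hα w hw hC
  by_contra hcon
  push_neg at hcon
  set Z := {p : Ultrafilter ℕ // ¬ RKLE w p} with hZ
  have key : ∀ γ : Ordinal, γ ≤ α → UCompact (vSeq (modif u X) fX γ) Z := by
    intro γ
    induction γ using Ordinal.induction with
    | h γ IH =>
      intro hγα
      have hγ1 : γ < omega1 := lt_of_le_of_lt hγα hα
      rw [vSeq, extend_eq_bind]
      apply ucompact_bind
      · by_cases hmem : γ ∈ X ∨ (Order.IsSuccLimit γ ∧ γ < omega1)
        · rw [modif, if_pos hmem]
          exact Z_ucompact hw (hcon γ hγα hmem)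
        · rw [modif, if_neg hmem]
          exact Z_ucompact hw (not_RKLE_pure hw.1 0)
      · intro i
        rcases Ordinal.zero_or_succ_or_isSuccLimit γ with h0 | ⟨δ, hδ⟩ | hlim
        · subst h0
          obtain ⟨n, hn⟩ := hfX.1.2 i
          rw [hn]
          exact Z_ucompact hw (not_RKLE_pure hw.1 n)
        · subst hδ
          have hδω : δ + 1 < omega1 := by rwa [Ordinal.add_one_eq_succ]
          obtain ⟨gb, _, hmap⟩ := (hfX.2.1 δ hδω).2.2 i
          have hIH := IH δ (Order.lt_succ δ) (le_trans (Order.lt_succ δ).le hγα)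
          rw [← Ordinal.add_one_eq_succ]
          exact ucompact_of_rkle ⟨gb, hmap⟩ hIH
        · obtain ⟨gb, _, hmap⟩ := (hfX.2.2 γ hγ1 hlim).2.2 i
          have hlt : L γ i < γ := (hL γ hγ1 hlim).2.1 i
          exact ucompact_of_rkle ⟨gb, hmap⟩ (IH _ hlt (le_trans hlt.le hγα))
  exact Z_not_wcompact hw.1 (ucompact_down (hC _ (ucompact_up (key α le_rfl))))
end
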